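/- Let k_B, k_D, k_E, k_N, ε, α, M, γ > 0 with k_D < k_B, N ≥ 0. With L̄ = k_D/k_B, B̄ = (1−L̄)/(1 + α·k_D/k_N + k_E·k_D/(ε·k_B)), η̄ = γ·L̄/(1−L̄), m = M/(L̄(1−L̄)), the coefficients a₀ = m·B̄·(k_E·k_N·k_D + k_N·k_B·ε + k_D·k_B·α·ε) + N²·η̄·B̄·(k_E·k_N·k_D/k_B + k_N·ε + k_D·α·ε), together with a₁, a₂, a₃, a₄ as in the quartic characteristic polynomial of the linearized 1D hyperbolic system, satisfy all the Routh–Hurwitz conditions: aᵢ > 0 for all i, a₃a₂ > a₄a₁, and a₃a₂a₁ > a₄a₁² + a₃²a₀. -/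

import Mathlib

set_option maxHeartbeats 4000000
set_option maxRecDepth 100000

theorem stmt_9 (kB kD kE kN ε α M γ N : ℝ)
    (hkB : 0 < kB) (hkD : 0 < kD) (hkE : 0 < kE) (hkN : 0 < kN)
    (hε : 0 < ε) (hα : 0 < α) (hM : 0 < M) (hγ : 0 < γ)
    (hlt : kD < kB) (hN : 0 ≤ N)
    (Bbar Lbar ηbar m : ℝ)
    (hL : Lbar = kD / kB)
    (hB : Bbar = (1 - Lbar) / (1 + α * kD / kN + kE * kD / (ε * kB)))
    (hη : ηbar = γ * Lbar / (1 - Lbar))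
    (hm : m = M / (Lbar * (1 - Lbar)))
    (a0 a1 a2 a3 a4 : ℝ)
    (h4 : a4 = 1)
    (h3 : a3 = m + Bbar * (kB + kE) + kN + ε)
    (h2 : a2 = m * Bbar * (kB + kE) + m * (kN + ε)
        + N ^ 2 * ηbar * Bbar * (1 + kE * kD / (kB * ε) + α * kD / kN)
        + Bbar * (kB * kN + kE * kN + kE * kD + kB * kD * α + kB * ε) + kN * ε)
    (h1 : a1 = m * Bbar * (kB * kN + kE * kN + kE * kD + kB * kD * α + kB * ε)
        + m * (kN * ε)
        + N ^ 2 * ηbar * Bbar * (kN + ε) * (1 + α * kD / kN + kE * kD / (ε * kB))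
        + Bbar * (kE * kN * kD + kB * kN * ε + kB * kD * α * ε))
    (h0 : a0 = m * Bbar * (kE * kN * kD + kN * kB * ε + kD * kB * α * ε)
        + N ^ 2 * ηbar * Bbar * (kE * kN * kD / kB + kN * ε + kD * α * ε)) :
    0 < a0 ∧ 0 < a1 ∧ 0 < a2 ∧ 0 < a3 ∧ 0 < a4 ∧
    a3 * a2 > a4 * a1 ∧
    a3 * a2 * a1 > a4 * a1 ^ 2 + a3 ^ 2 * a0 := by
  have hkB' : kB ≠ 0 := ne_of_gt hkB
  have hkN' : kN ≠ 0 := ne_of_gt hkN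
  have hε' : ε ≠ 0 := ne_of_gt hε
  have hLpos : 0 < Lbar := by rw [hL]; positivity
  have hL1 : Lbar < 1 := by rw [hL]; exact (div_lt_one hkB).mpr hlt
  have hL1' : 0 < 1 - Lbar := by linarith
  have hBpos : 0 < Bbar := by rw [hB]; positivity
  have hηpos : 0 < ηbar := by rw [hη]; positivity
  have hmpos : 0 < m := by rw [hm]; positivity
  obtain ⟨Q, hQdef⟩ : ∃ q : ℝ,
      q = N ^ 2 * ηbar * Bbar * (1 + α * kD / kN + kE * kD / (ε * kB)) := ⟨_, rfl⟩
  have hQ : 0 ≤ Q := by rw [hQdef]; positivity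
  have h2' : a2 = m * Bbar * (kB + kE) + m * (kN + ε) + Q
      + Bbar * (kB * kN + kE * kN + kE * kD + kB * kD * α + kB * ε) + kN * ε := by
    rw [h2, hQdef]; ring
  have h1' : a1 = m * Bbar * (kB * kN + kE * kN + kE * kD + kB * kD * α + kB * ε)
      + m * (kN * ε) + Q * (kN + ε)
      + Bbar * (kE * kN * kD + kB * kN * ε + kB * kD * α * ε) := by
    rw [h1, hQdef]; field_simp
  have h0' : a0 = m * Bbar * (kE * kN * kD + kN * kB * ε + kD * kB * α * ε)
      + Q * (kN * ε) := by
    rw [h0, hQdef]; field_simp; ring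
  have hA0 : 0 < a0 := by rw [h0']; positivity
  have hA1 : 0 < a1 := by rw [h1']; positivity
  have hA2 : 0 < a2 := by rw [h2']; positivity
  have hA3 : 0 < a3 := by rw [h3]; positivity
  have e1 : a3 * a2 - a1 = (m * Q + ε * m ^ 2 + ε ^ 2 * m + kN * m ^ 2 + 2 * kN * ε * m + kN * ε ^ 2 + kN ^ 2 * m + kN ^ 2 * ε + kE * m ^ 2 * Bbar + 2 * kE * ε * m * Bbar + 2 * kE * kN * m * Bbar + 2 * kE * kN * ε * Bbar + kE ^ 2 * m * Bbar ^ 2 + kE ^ 2 * kN * Bbar ^ 2 + kB * Bbar * Q + kB * m ^ 2 * Bbar + 2 * kB * ε * m * Bbar + 2 * kB * kN * m * Bbar + 2 * kB * kN * ε * Bbar + 2 * kB * kE * m * Bbar ^ 2 + 2 * kB * kE * kN * Bbar ^ 2 + kB ^ 2 * m * Bbar ^ 2) + (kE * Bbar * Q + kE * kN ^ 2 * Bbar + kD * kE * ε * Bbar + kD * kE ^ 2 * Bbar ^ 2 + kB * ε ^ 2 * Bbar + kB * kN ^ 2 * Bbar + kB * kE * ε * Bbar ^ 2 + kB * kD *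 kN * α * Bbar + kB * kD * kE * Bbar ^ 2 + kB * kD * kE * α * Bbar ^ 2 + kB ^ 2 * ε * Bbar ^ 2 + kB ^ 2 * kN * Bbar ^ 2 + kB ^ 2 * kD * α * Bbar ^ 2) := by
    rw [h3, h2', h1']; ring
  have hT1a : 0 < (m * Q + ε * m ^ 2 + ε ^ 2 * m + kN * m ^ 2 + 2 * kN * ε * m + kN * ε ^ 2 + kN ^ 2 * m + kN ^ 2 * ε + kE * m ^ 2 * Bbar + 2 * kE * ε * m * Bbar + 2 * kE * kN * m * Bbar + 2 * kE * kN * ε * Bbar + kE ^ 2 * m * Bbar ^ 2 + kE ^ 2 * kN * Bbar ^ 2 + kB * Bbar * Q + kB * m ^ 2 * Bbar + 2 * kB * ε * m * Bbar + 2 * kB * kN * m * Bbar + 2 * kB * kN * ε * Bbar + 2 * kB * kE * m * Bbar ^ 2 + 2 * kB * kE * kN * Bbar ^ 2 + kB ^ 2 * m * Bbar ^ 2) := by positivity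
  have hT1b : 0 ≤ (kE * Bbar * Q + kE * kN ^ 2 * Bbar + kD * kE * ε * Bbar + kD * kE ^ 2 * Bbar ^ 2 + kB * ε ^ 2 * Bbar + kB * kN ^ 2 * Bbar + kB * kE * ε * Bbar ^ 2 + kB * kD * kN * α * Bbar + kB * kD * kE * Bbar ^ 2 + kB * kD * kE * α * Bbar ^ 2 + kB ^ 2 * ε * Bbar ^ 2 + kB ^ 2 * kN * Bbar ^ 2 + kB ^ 2 * kD * α * Bbar ^ 2) := by positivity
  have e2 : a1 * (m * Q + ε * m ^ 2 + ε ^ 2 * m + kN * m ^ 2 + 2 * kN * ε * m + kN * ε ^ 2 + kN ^ 2 * m + kN ^ 2 * ε + kE * m ^ 2 * Bbar + 2 * kE * ε * m * Bbar + 2 * kE * kN * m * Bbar + 2 * kE * kN * ε * Bbar + kE ^ 2 * m * Bbar ^ 2 + kE ^ 2 * kN * Bbar ^ 2 + kB * Bbar * Q + kB * m ^ 2 * Bbar + 2 * kB * ε * m * Bbar + 2 * kB * kN * m * Bbar + 2 * kB * kN * ε * Bbar + 2 * kB * kE * m * Bbar ^ 2 + 2 * kB * kE * kN * Bbar ^ 2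 + kB ^ 2 * m * Bbar ^ 2) - a3 ^ 2 * a0 = ε * m * Q ^ 2 + ε ^ 2 * m ^ 2 * Q + ε ^ 3 * m * Q + kN * m * Q ^ 2 + 2 * kN * ε * m ^ 2 * Q + kN * ε ^ 2 * m * Q + kN * ε ^ 2 * m ^ 3 + kN * ε ^ 3 * m ^ 2 + kN ^ 2 * m ^ 2 * Q + kN ^ 2 * ε * m * Q + kN ^ 2 * ε * m ^ 3 + 2 * kN ^ 2 * ε ^ 2 * m ^ 2 + kN ^ 2 * ε ^ 3 * m + kN ^ 3 * m * Q + kN ^ 3 * ε * m ^ 2 + kN ^ 3 * ε ^ 2 * m + kE * ε * m ^ 2 * Bbar * Q + 2 * kE * ε ^ 2 * m * Bbar * Q + 2 * kE * kN * m ^ 2 * Bbar * Q + 2 * kE * kN * ε * m * Bbar * Q + 2 * kE * kN * ε * m ^ 3 * Bbar + 3 * kE * kN * ε ^ 2 * m ^ 2 * Bbar + 2 * kE * kN ^ 2 * m * Bbar * Q + kE * kN ^ 2 * m ^ 3 * Bbar + 4 * kE * kN ^ 2 * ε * m ^ 2 * Bbar + 3 * kE * kN ^ 2 * ε ^ 2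 * m * Bbar + kE * kN ^ 3 * m ^ 2 * Bbar + kE * kN ^ 3 * ε * m * Bbar + kE ^ 2 * ε * m * Bbar ^ 2 * Q + kE ^ 2 * kN * m * Bbar ^ 2 * Q + kE ^ 2 * kN * m ^ 3 * Bbar ^ 2 + 3 * kE ^ 2 * kN * ε * m ^ 2 * Bbar ^ 2 + kE ^ 2 * kN ^ 2 * Bbar ^ 2 * Q + 2 * kE ^ 2 * kN ^ 2 * m ^ 2 * Bbar ^ 2 + 3 * kE ^ 2 * kN ^ 2 * ε * m * Bbar ^ 2 + kE ^ 3 * kN * m ^ 2 * Bbar ^ 3 + kE ^ 3 * kN ^ 2 * m * Bbar ^ 3 + kD * kE * m ^ 2 * Bbar * Q + kD * kE * ε * m ^ 3 * Bbar + kD * kE * ε ^ 2 * m ^ 2 * Bbar + kD * kE * kN * m * Bbar * Q + kD * kE * kN * ε * m ^ 2 * Bbar + kD * kE * kN * ε ^ 2 * m * Bbar + kD * kE * kN ^ 2 * ε * m * Bbar + kD * kE * kN ^ 2 * ε ^ 2 * Bbar + kD * kE * kN ^ 3 * ε * Bbar + kD * kE ^ 2 * m ^ 3 * Bbar ^ 2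 + 2 * kD * kE ^ 2 * ε * m ^ 2 * Bbar ^ 2 + kD * kE ^ 2 * kN * m ^ 2 * Bbar ^ 2 + 2 * kD * kE ^ 2 * kN * ε * m * Bbar ^ 2 + 2 * kD * kE ^ 2 * kN ^ 2 * ε * Bbar ^ 2 + kD * kE ^ 3 * m ^ 2 * Bbar ^ 3 + kD * kE ^ 3 * kN * m * Bbar ^ 3 + kD * kE ^ 3 * kN ^ 2 * Bbar ^ 3 + kB * ε * Bbar * Q ^ 2 + 2 * kB * ε * m ^ 2 * Bbar * Q + 2 * kB * ε ^ 2 * m * Bbar * Q + kB * ε ^ 2 * m ^ 3 * Bbar + kB * ε ^ 3 * m ^ 2 * Bbar + kB * kN * Bbar * Q ^ 2 + 2 * kB * kN * m ^ 2 * Bbar * Q + 4 * kB * kN * ε * m * Bbar * Q + 2 * kB * kN * ε * m ^ 3 * Bbar + 4 * kB * kN * ε ^ 2 * m ^ 2 * Bbar + kB * kN * ε ^ 3 * m * Bbar + 2 * kB * kN ^ 2 * m * Bbar * Q + kB * kN ^ 2 * m ^ 3 * Bbar + 4 * kB * kN ^ 2 * ε * m ^ 2 * Bbar + 4 * kB *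 kN ^ 2 * ε ^ 2 * m * Bbar + kB * kN ^ 2 * ε ^ 3 * Bbar + kB * kN ^ 3 * m ^ 2 * Bbar + kB * kN ^ 3 * ε * m * Bbar + kB * kN ^ 3 * ε ^ 2 * Bbar + 2 * kB * kE * ε * m * Bbar ^ 2 * Q + kB * kE * ε * m ^ 3 * Bbar ^ 2 + 2 * kB * kE * ε ^ 2 * m ^ 2 * Bbar ^ 2 + 3 * kB * kE * kN * m * Bbar ^ 2 * Q + 2 * kB * kE * kN * m ^ 3 * Bbar ^ 2 + 7 * kB * kE * kN * ε * m ^ 2 * Bbar ^ 2 + 2 * kB * kE * kN * ε ^ 2 * m * Bbar ^ 2 + 2 * kB * kE * kN ^ 2 * Bbar ^ 2 * Q + 4 * kB * kE * kN ^ 2 * m ^ 2 * Bbar ^ 2 + 6 * kB * kE * kN ^ 2 * ε * m * Bbar ^ 2 + 2 * kB * kE * kN ^ 2 * ε ^ 2 * Bbar ^ 2 + kB * kE ^ 2 * ε * m ^ 2 * Bbar ^ 3 + 3 * kB * kE ^ 2 * kN * m ^ 2 * Bbar ^ 3 + kB * kE ^ 2 * kN * ε * m * Bbar ^ 3 + 3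 * kB * kE ^ 2 * kN ^ 2 * m * Bbar ^ 3 + kB * kE ^ 2 * kN ^ 2 * ε * Bbar ^ 3 + kB * kD * α * m ^ 2 * Bbar * Q + kB * kD * ε * α * m * Bbar * Q + kB * kD * kN * α * m ^ 3 * Bbar + kB * kD * kN * ε * α * m ^ 2 * Bbar + kB * kD * kN * ε ^ 2 * α * m * Bbar + kB * kD * kN * ε ^ 3 * α * Bbar + kB * kD * kN ^ 2 * α * m ^ 2 * Bbar + kB * kD * kN ^ 2 * ε * α * m * Bbar + kB * kD * kN ^ 2 * ε ^ 2 * α * Bbar + kB * kD * kE * m * Bbar ^ 2 * Q + kB * kD * kE * m ^ 3 * Bbar ^ 2 + kB * kD * kE * α * m ^ 3 * Bbar ^ 2 + 2 * kB * kD * kE * ε * m ^ 2 * Bbar ^ 2 + kB * kD * kE * ε * α * m ^ 2 * Bbar ^ 2 + kB * kD * kE * kN * Bbar ^ 2 * Q + kB * kD * kE * kN * m ^ 2 * Bbar ^ 2 + 2 * kB * kD * kE * kN * α * m ^ 2 * Bbar ^ 2 + 2 * kB * kD * kE * kN * ε * m * Bbar ^ 2 + 2 * kB * kD * kE * kN *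 ε * α * m * Bbar ^ 2 + 2 * kB * kD * kE * kN * ε ^ 2 * α * Bbar ^ 2 + 2 * kB * kD * kE * kN ^ 2 * ε * Bbar ^ 2 + 2 * kB * kD * kE ^ 2 * m ^ 2 * Bbar ^ 3 + kB * kD * kE ^ 2 * α * m ^ 2 * Bbar ^ 3 + 2 * kB * kD * kE ^ 2 * kN * m * Bbar ^ 3 + kB * kD * kE ^ 2 * kN * α * m * Bbar ^ 3 + kB * kD * kE ^ 2 * kN * ε * α * Bbar ^ 3 + 2 * kB * kD * kE ^ 2 * kN ^ 2 * Bbar ^ 3 + 2 * kB ^ 2 * ε * m * Bbar ^ 2 * Q + kB ^ 2 * ε * m ^ 3 * Bbar ^ 2 + 2 * kB ^ 2 * ε ^ 2 * m ^ 2 * Bbar ^ 2 + 2 * kB ^ 2 * kN * m * Bbar ^ 2 * Q + kB ^ 2 * kN * m ^ 3 * Bbar ^ 2 + 4 * kB ^ 2 * kN * ε * m ^ 2 * Bbar ^ 2 + 2 * kB ^ 2 * kN * ε ^ 2 * m * Bbar ^ 2 + 2 * kB ^ 2 * kN ^ 2 * m ^ 2 * Bbar ^ 2 + 2 * kB ^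 2 * kN ^ 2 * ε * m * Bbar ^ 2 + 2 * kB ^ 2 * kN ^ 2 * ε ^ 2 * Bbar ^ 2 + 2 * kB ^ 2 * kE * ε * m ^ 2 * Bbar ^ 3 + 3 * kB ^ 2 * kE * kN * m ^ 2 * Bbar ^ 3 + 2 * kB ^ 2 * kE * kN * ε * m * Bbar ^ 3 + 2 * kB ^ 2 * kE * kN ^ 2 * m * Bbar ^ 3 + 2 * kB ^ 2 * kE * kN ^ 2 * ε * Bbar ^ 3 + kB ^ 2 * kD * α * m * Bbar ^ 2 * Q + kB ^ 2 * kD * α * m ^ 3 * Bbar ^ 2 + kB ^ 2 * kD * ε * α * Bbar ^ 2 * Q + kB ^ 2 * kD * ε * α * m ^ 2 * Bbar ^ 2 + 2 * kB ^ 2 * kD * kN * α * m ^ 2 * Bbar ^ 2 + 2 * kB ^ 2 * kD * kN * ε * α * m * Bbar ^ 2 + 2 * kB ^ 2 * kD * kN * ε ^ 2 * α * Bbar ^ 2 + kB ^ 2 * kD * kE * m ^ 2 * Bbar ^ 3 + 2 * kB ^ 2 * kD * kE * α * m ^ 2 * Bbar ^ 3 + 2 * kB ^ 2 * kD * kE *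 kN * α * m * Bbar ^ 3 + 2 * kB ^ 2 * kD * kE * kN * ε * α * Bbar ^ 3 + kB ^ 3 * ε * m ^ 2 * Bbar ^ 3 + kB ^ 3 * kN * m ^ 2 * Bbar ^ 3 + kB ^ 3 * kD * α * m ^ 2 * Bbar ^ 3 := by
    rw [h3, h1', h0']; ring
  have hRpos : 0 < (ε * m * Q ^ 2 + ε ^ 2 * m ^ 2 * Q + ε ^ 3 * m * Q + kN * m * Q ^ 2 + 2 * kN * ε * m ^ 2 * Q + kN * ε ^ 2 * m * Q + kN * ε ^ 2 * m ^ 3 + kN * ε ^ 3 * m ^ 2 + kN ^ 2 * m ^ 2 * Q + kN ^ 2 * ε * m * Q + kN ^ 2 * ε * m ^ 3 + 2 * kN ^ 2 * ε ^ 2 * m ^ 2 + kN ^ 2 * ε ^ 3 * m + kN ^ 3 * m * Q + kN ^ 3 * ε * m ^ 2 + kN ^ 3 * ε ^ 2 * m + kE * ε * m ^ 2 * Bbar * Q + 2 * kE * ε ^ 2 * m * Bbar * Q + 2 * kE * kN * m ^ 2 * Bbar * Q + 2 * kE * kN * ε * m * Bbar * Q + 2 * kE * kN * ε * m ^ 3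 * Bbar + 3 * kE * kN * ε ^ 2 * m ^ 2 * Bbar + 2 * kE * kN ^ 2 * m * Bbar * Q + kE * kN ^ 2 * m ^ 3 * Bbar + 4 * kE * kN ^ 2 * ε * m ^ 2 * Bbar + 3 * kE * kN ^ 2 * ε ^ 2 * m * Bbar + kE * kN ^ 3 * m ^ 2 * Bbar + kE * kN ^ 3 * ε * m * Bbar + kE ^ 2 * ε * m * Bbar ^ 2 * Q + kE ^ 2 * kN * m * Bbar ^ 2 * Q + kE ^ 2 * kN * m ^ 3 * Bbar ^ 2 + 3 * kE ^ 2 * kN * ε * m ^ 2 * Bbar ^ 2 + kE ^ 2 * kN ^ 2 * Bbar ^ 2 * Q + 2 * kE ^ 2 * kN ^ 2 * m ^ 2 * Bbar ^ 2 + 3 * kE ^ 2 * kN ^ 2 * ε * m * Bbar ^ 2 + kE ^ 3 * kN * m ^ 2 * Bbar ^ 3 + kE ^ 3 * kN ^ 2 * m * Bbar ^ 3 + kD * kE * m ^ 2 * Bbar * Q + kD * kE * ε * m ^ 3 * Bbar + kD * kE * ε ^ 2 * m ^ 2 * Bbar + kD * kE * kN * m * Bbar * Q + kD * kE * kN * ε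 * m ^ 2 * Bbar + kD * kE * kN * ε ^ 2 * m * Bbar + kD * kE * kN ^ 2 * ε * m * Bbar + kD * kE * kN ^ 2 * ε ^ 2 * Bbar + kD * kE * kN ^ 3 * ε * Bbar + kD * kE ^ 2 * m ^ 3 * Bbar ^ 2 + 2 * kD * kE ^ 2 * ε * m ^ 2 * Bbar ^ 2 + kD * kE ^ 2 * kN * m ^ 2 * Bbar ^ 2 + 2 * kD * kE ^ 2 * kN * ε * m * Bbar ^ 2 + 2 * kD * kE ^ 2 * kN ^ 2 * ε * Bbar ^ 2 + kD * kE ^ 3 * m ^ 2 * Bbar ^ 3 + kD * kE ^ 3 * kN * m * Bbar ^ 3 + kD * kE ^ 3 * kN ^ 2 * Bbar ^ 3 + kB * ε * Bbar * Q ^ 2 + 2 * kB * ε * m ^ 2 * Bbar * Q + 2 * kB * ε ^ 2 * m * Bbar * Q + kB * ε ^ 2 * m ^ 3 * Bbar + kB * ε ^ 3 * m ^ 2 * Bbar + kB * kN * Bbar * Q ^ 2 + 2 * kB * kN * m ^ 2 * Bbar * Q + 4 * kB * kN * ε * m * Bbar * Q + 2 * kB * kN * ε * m ^ 3 * Bbar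 + 4 * kB * kN * ε ^ 2 * m ^ 2 * Bbar + kB * kN * ε ^ 3 * m * Bbar + 2 * kB * kN ^ 2 * m * Bbar * Q + kB * kN ^ 2 * m ^ 3 * Bbar + 4 * kB * kN ^ 2 * ε * m ^ 2 * Bbar + 4 * kB * kN ^ 2 * ε ^ 2 * m * Bbar + kB * kN ^ 2 * ε ^ 3 * Bbar + kB * kN ^ 3 * m ^ 2 * Bbar + kB * kN ^ 3 * ε * m * Bbar + kB * kN ^ 3 * ε ^ 2 * Bbar + 2 * kB * kE * ε * m * Bbar ^ 2 * Q + kB * kE * ε * m ^ 3 * Bbar ^ 2 + 2 * kB * kE * ε ^ 2 * m ^ 2 * Bbar ^ 2 + 3 * kB * kE * kN * m * Bbar ^ 2 * Q + 2 * kB * kE * kN * m ^ 3 * Bbar ^ 2 + 7 * kB * kE * kN * ε * m ^ 2 * Bbar ^ 2 + 2 * kB * kE * kN * ε ^ 2 * m * Bbar ^ 2 + 2 * kB * kE * kN ^ 2 * Bbar ^ 2 * Q + 4 * kB * kE * kN ^ 2 * m ^ 2 * Bbar ^ 2 + 6 * kB * kE * kN ^ 2 * ε * m * Bbar ^ 2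 + 2 * kB * kE * kN ^ 2 * ε ^ 2 * Bbar ^ 2 + kB * kE ^ 2 * ε * m ^ 2 * Bbar ^ 3 + 3 * kB * kE ^ 2 * kN * m ^ 2 * Bbar ^ 3 + kB * kE ^ 2 * kN * ε * m * Bbar ^ 3 + 3 * kB * kE ^ 2 * kN ^ 2 * m * Bbar ^ 3 + kB * kE ^ 2 * kN ^ 2 * ε * Bbar ^ 3 + kB * kD * α * m ^ 2 * Bbar * Q + kB * kD * ε * α * m * Bbar * Q + kB * kD * kN * α * m ^ 3 * Bbar + kB * kD * kN * ε * α * m ^ 2 * Bbar + kB * kD * kN * ε ^ 2 * α * m * Bbar + kB * kD * kN * ε ^ 3 * α * Bbar + kB * kD * kN ^ 2 * α * m ^ 2 * Bbar + kB * kD * kN ^ 2 * ε * α * m * Bbar + kB * kD * kN ^ 2 * ε ^ 2 * α * Bbar + kB * kD * kE * m * Bbar ^ 2 * Q + kB * kD * kE * m ^ 3 * Bbar ^ 2 + kB * kD * kE * α * m ^ 3 * Bbar ^ 2 + 2 * kB * kD * kE * ε * m ^ 2 * Bbar ^ 2 + kB * kD * kE * ε * α * m ^ 2 * Bbar ^ 2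 + kB * kD * kE * kN * Bbar ^ 2 * Q + kB * kD * kE * kN * m ^ 2 * Bbar ^ 2 + 2 * kB * kD * kE * kN * α * m ^ 2 * Bbar ^ 2 + 2 * kB * kD * kE * kN * ε * m * Bbar ^ 2 + 2 * kB * kD * kE * kN * ε * α * m * Bbar ^ 2 + 2 * kB * kD * kE * kN * ε ^ 2 * α * Bbar ^ 2 + 2 * kB * kD * kE * kN ^ 2 * ε * Bbar ^ 2 + 2 * kB * kD * kE ^ 2 * m ^ 2 * Bbar ^ 3 + kB * kD * kE ^ 2 * α * m ^ 2 * Bbar ^ 3 + 2 * kB * kD * kE ^ 2 * kN * m * Bbar ^ 3 + kB * kD * kE ^ 2 * kN * α * m * Bbar ^ 3 + kB * kD * kE ^ 2 * kN * ε * α * Bbar ^ 3 + 2 * kB * kD * kE ^ 2 * kN ^ 2 * Bbar ^ 3 + 2 * kB ^ 2 * ε * m * Bbar ^ 2 * Q + kB ^ 2 * ε * m ^ 3 * Bbar ^ 2 + 2 * kB ^ 2 * ε ^ 2 * m ^ 2 * Bbar ^ 2 + 2 * kB ^ 2 * kN * m * Bbar ^ 2 * Q + kB ^ 2 * kN * m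 ^ 3 * Bbar ^ 2 + 4 * kB ^ 2 * kN * ε * m ^ 2 * Bbar ^ 2 + 2 * kB ^ 2 * kN * ε ^ 2 * m * Bbar ^ 2 + 2 * kB ^ 2 * kN ^ 2 * m ^ 2 * Bbar ^ 2 + 2 * kB ^ 2 * kN ^ 2 * ε * m * Bbar ^ 2 + 2 * kB ^ 2 * kN ^ 2 * ε ^ 2 * Bbar ^ 2 + 2 * kB ^ 2 * kE * ε * m ^ 2 * Bbar ^ 3 + 3 * kB ^ 2 * kE * kN * m ^ 2 * Bbar ^ 3 + 2 * kB ^ 2 * kE * kN * ε * m * Bbar ^ 3 + 2 * kB ^ 2 * kE * kN ^ 2 * m * Bbar ^ 3 + 2 * kB ^ 2 * kE * kN ^ 2 * ε * Bbar ^ 3 + kB ^ 2 * kD * α * m * Bbar ^ 2 * Q + kB ^ 2 * kD * α * m ^ 3 * Bbar ^ 2 + kB ^ 2 * kD * ε * α * Bbar ^ 2 * Q + kB ^ 2 * kD * ε * α * m ^ 2 * Bbar ^ 2 + 2 * kB ^ 2 * kD * kN * α * m ^ 2 * Bbar ^ 2 + 2 * kB ^ 2 * kD * kN * ε * α * m *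 Bbar ^ 2 + 2 * kB ^ 2 * kD * kN * ε ^ 2 * α * Bbar ^ 2 + kB ^ 2 * kD * kE * m ^ 2 * Bbar ^ 3 + 2 * kB ^ 2 * kD * kE * α * m ^ 2 * Bbar ^ 3 + 2 * kB ^ 2 * kD * kE * kN * α * m * Bbar ^ 3 + 2 * kB ^ 2 * kD * kE * kN * ε * α * Bbar ^ 3 + kB ^ 3 * ε * m ^ 2 * Bbar ^ 3 + kB ^ 3 * kN * m ^ 2 * Bbar ^ 3 + kB ^ 3 * kD * α * m ^ 2 * Bbar ^ 3) := by positivity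
  refine ⟨hA0, hA1, hA2, hA3, by rw [h4]; norm_num, ?_, ?_⟩
  · rw [h4]; linarith [e1, hT1a, hT1b]
  · have e1m : a3 * a2 * a1 = a1 * a1 + a1 * (m * Q + ε * m ^ 2 + ε ^ 2 * m + kN * m ^ 2 + 2 * kN * ε * m + kN * ε ^ 2 + kN ^ 2 * m + kN ^ 2 * ε + kE * m ^ 2 * Bbar + 2 * kE * ε * m * Bbar + 2 * kE * kN * m * Bbar + 2 * kE * kN * ε * Bbar + kE ^ 2 * m * Bbar ^ 2 + kE ^ 2 * kN * Bbar ^ 2 + kB * Bbar * Q + kB * m ^ 2 * Bbar + 2 * kB * ε * m * Bbar + 2 * kB * kN * m * Bbar + 2 * kB * kN * ε * Bbar + 2 * kB * kE * m * Bbar ^ 2 + 2 * kB * kE * kN * Bbar ^ 2 + kB ^ 2 * m * Bbar ^ 2) + a1 * (kE * Bbar * Q + kE * kN ^ 2 * Bbar + kD * kE * ε * Bbar + kD * kE ^ 2 * Bbar ^ 2 + kB * ε ^ 2 * Bbar + kB * kN ^ 2 * Bbar + kB * kE * ε * Bbar ^ 2 + kB * kD * kN * α * Bbar + kB * kD * kE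 * Bbar ^ 2 + kB * kD * kE * α * Bbar ^ 2 + kB ^ 2 * ε * Bbar ^ 2 + kB ^ 2 * kN * Bbar ^ 2 + kB ^ 2 * kD * α * Bbar ^ 2) := by
      linear_combination a1 * e1
    rw [h4]
    linarith [e1m, e2, hRpos, mul_nonneg hA1.le hT1b]
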